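/- arXiv:2502.02010 — 6 statements merged into one kernel-verified Lean document; each statement's English description precedes it below -/
import Mathlib

section
/- Let g : ℝⁿ → ℝ be differentiable with gradient ∇g that is L-Lipschitz on the segment from θ to θ + p. Suppose ⟨∇g(θ), p⟩ + g(θ) − β ≤ 0, that β ≤ G − (1/2)‖p‖², and that g(θ) ≤ G. Then for every α ∈ [0, 1], g(θ + α p) ≤ G − (α/2)‖p‖² + L α² ‖p‖². -/
open RealInnerProductSpace

lemma descent_key
    {n : ℕ} (g : EuclideanSpace ℝ (Fin n) → ℝ)
    (g' : EuclideanSpace ℝ (Fin n) → EuclideanSpace ℝ (Fin n))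
    (hg : ∀ x, HasGradientAt g (g' x) x)
    (θ p : EuclideanSpace ℝ (Fin n)) (L : ℝ) (hL : 0 ≤ L)
    (hLip : ∀ x ∈ segment ℝ θ (θ + p), ∀ y ∈ segment ℝ θ (θ + p),
      ‖g' x - g' y‖ ≤ L * ‖x - y‖) :
    g (θ + p) ≤ g θ + ⟪g' θ, p⟫ + L / 2 * ‖p‖ ^ 2 := by
  set c : ℝ → EuclideanSpace ℝ (Fin n) := fun t => θ + t • p with hc
  have hcd : ∀ t : ℝ, HasDerivAt c p t := by
    intro t
    have := ((hasDerivAt_id t).smul_const p).const_add θ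
    simpa [hc] using this
  have hmem : ∀ t ∈ Set.Icc (0:ℝ) 1, c t ∈ segment ℝ θ (θ + p) := by
    intro t ht
    refine ⟨1 - t, t, by linarith [ht.2], ht.1, by linarith, ?_⟩
    simp [hc, smul_add, sub_smul]
    module
  have hφ : ∀ t : ℝ, HasDerivAt (fun t => g (c t)) ⟪g' (c t), p⟫ t := by
    intro t
    have h1 := (hg (c t)).hasFDerivAt.comp_hasDerivAt t (hcd t)
    exact (by simpa using h1 : HasDerivAt (g ∘ c) ⟪g' (c t), p⟫ t)
  have hcont : ContinuousOn (fun t => ⟪g' (c t), p⟫) (Set.Icc (0:ℝ) 1) := by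
    have : LipschitzOnWith (Real.toNNReal (L * ‖p‖ ^ 2))
        (fun t => ⟪g' (c t), p⟫) (Set.Icc (0:ℝ) 1) := by
      apply LipschitzOnWith.of_dist_le_mul
      intro s hs t ht
      have h1 : dist ⟪g' (c s), p⟫ ⟪g' (c t), p⟫ = |⟪g' (c s) - g' (c t), p⟫| := by
        rw [Real.dist_eq, ← inner_sub_left]
      rw [h1]
      calc |⟪g' (c s) - g' (c t), p⟫| ≤ ‖g' (c s) - g' (c t)‖ * ‖p‖ :=
            abs_real_inner_le_norm _ _
        _ ≤ (L * ‖c s - c t‖) * ‖p‖ := by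
            have := hLip _ (hmem s hs) _ (hmem t ht)
            exact mul_le_mul_of_nonneg_right this (norm_nonneg p)
        _ ≤ ↑(Real.toNNReal (L * ‖p‖ ^ 2)) * dist s t := by
            have hcs : c s - c t = (s - t) • p := by
              simp [hc]; module
            rw [hcs, norm_smul, Real.coe_toNNReal _ (by positivity),
              Real.dist_eq, Real.norm_eq_abs]
            apply le_of_eq; ring
    exact this.continuousOn
  have hint : ∫ t in (0:ℝ)..1, ⟪g' (c t), p⟫ = g (c 1) - g (c 0) := by
    apply intervalIntegral.integral_eq_sub_of_hasDerivAt (f := fun t => g (c t))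
    · intro t ht
      exact hφ t
    · apply ContinuousOn.intervalIntegrable
      rwa [Set.uIcc_of_le (by norm_num : (0:ℝ) ≤ 1)]
  have hbound : ∀ t ∈ Set.Icc (0:ℝ) 1,
      ⟪g' (c t), p⟫ ≤ ⟪g' θ, p⟫ + L * ‖p‖ ^ 2 * t := by
    intro t ht
    have hθ : θ ∈ segment ℝ θ (θ + p) := left_mem_segment ℝ _ _
    have h1 : ⟪g' (c t), p⟫ - ⟪g' θ, p⟫ = ⟪g' (c t) - g' θ, p⟫ := by
      rw [inner_sub_left]
    have h2 : |⟪g' (c t) - g' θ, p⟫| ≤ ‖g' (c t) - g' θ‖ * ‖p‖ :=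
      abs_real_inner_le_norm _ _
    have h3 := hLip _ (hmem t ht) _ hθ
    have h4 : c t - θ = t • p := by simp [hc]
    rw [h4, norm_smul] at h3
    have h5 : ‖(t:ℝ)‖ = t := by
      rw [Real.norm_eq_abs, abs_of_nonneg ht.1]
    rw [h5] at h3
    have h6 : ⟪g' (c t) - g' θ, p⟫ ≤ L * (t * ‖p‖) * ‖p‖ := by
      calc ⟪g' (c t) - g' θ, p⟫ ≤ |⟪g' (c t) - g' θ, p⟫| := le_abs_self _
        _ ≤ ‖g' (c t) - g' θ‖ * ‖p‖ := h2
        _ ≤ L * (t * ‖p‖) * ‖p‖ :=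
            mul_le_mul_of_nonneg_right h3 (norm_nonneg p)
    nlinarith [h6, h1]
  have hint2 : ∫ t in (0:ℝ)..1, (⟪g' θ, p⟫ + L * ‖p‖ ^ 2 * t)
      = ⟪g' θ, p⟫ + L / 2 * ‖p‖ ^ 2 := by
    rw [intervalIntegral.integral_add (g := fun t : ℝ => L * ‖p‖ ^ 2 * t) (intervalIntegrable_const)
      ((continuous_const.mul continuous_id').intervalIntegrable 0 1),
      intervalIntegral.integral_const, intervalIntegral.integral_const_mul,
      integral_id]
    simp
    ring
  have hmono : ∫ t in (0:ℝ)..1, ⟪g' (c t), p⟫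
      ≤ ∫ t in (0:ℝ)..1, (⟪g' θ, p⟫ + L * ‖p‖ ^ 2 * t) := by
    apply intervalIntegral.integral_mono_on (by norm_num)
    · apply ContinuousOn.intervalIntegrable
      rwa [Set.uIcc_of_le (by norm_num : (0:ℝ) ≤ 1)]
    · exact (continuous_const.add (continuous_const.mul continuous_id')).intervalIntegrable 0 1
    · exact hbound
  have hc1 : c 1 = θ + p := by simp [hc]
  have hc0 : c 0 = θ := by simp [hc]
  rw [hc1, hc0] at hint
  rw [hint, hint2] at hmono
  linarith

/-- Descent estimate for an active index: if `g` is differentiable with an `L`-Lipschitz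
gradient on the segment from `θ` to `θ + p`, `⟪∇g(θ), p⟫ + g(θ) - β ≤ 0`,
`β ≤ G - (1/2)‖p‖²` and `g(θ) ≤ G`, then for every `α ∈ [0,1]`,
`g (θ + α p) ≤ G - (α/2)‖p‖² + L α² ‖p‖²`. -/
theorem descent_estimate_active_index
    {n : ℕ} (g : EuclideanSpace ℝ (Fin n) → ℝ)
    (g' : EuclideanSpace ℝ (Fin n) → EuclideanSpace ℝ (Fin n))
    (hg : ∀ x, HasGradientAt g (g' x) x)
    (θ p : EuclideanSpace ℝ (Fin n)) (β G L : ℝ) (hL : 0 < L)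
    (hLip : ∀ x ∈ segment ℝ θ (θ + p), ∀ y ∈ segment ℝ θ (θ + p),
      ‖g' x - g' y‖ ≤ L * ‖x - y‖)
    (hcon : ⟪g' θ, p⟫ + g θ - β ≤ 0)
    (hβ : β ≤ G - (1/2) * ‖p‖^2)
    (hgθ : g θ ≤ G) :
    ∀ α ∈ Set.Icc (0:ℝ) 1,
      g (θ + α • p) ≤ G - (α/2) * ‖p‖^2 + L * α^2 * ‖p‖^2 := by
  intro α hα
  obtain ⟨hα0, hα1⟩ := hα
  have hsub : segment ℝ θ (θ + α • p) ⊆ segment ℝ θ (θ + p) := by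
    have hmem : θ + α • p ∈ segment ℝ θ (θ + p) :=
      ⟨1 - α, α, by linarith, hα0, by linarith, by
        simp [smul_add, sub_smul]; module⟩
    exact (convex_segment θ (θ + p)).segment_subset
      (left_mem_segment ℝ _ _) hmem
  have key := descent_key g g' hg θ (α • p) L hL.le
    (fun x hx y hy => hLip x (hsub hx) y (hsub hy))
  have hinner : ⟪g' θ, α • p⟫ = α * ⟪g' θ, p⟫ := real_inner_smul_right _ _ _
  have hnorm : ‖α • p‖ ^ 2 = α ^ 2 * ‖p‖ ^ 2 := by
    rw [norm_smul, mul_pow, Real.norm_eq_abs, sq_abs]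
  rw [hinner, hnorm] at key
  have h1 : α * ⟪g' θ, p⟫ ≤ α * (β - g θ) :=
    mul_le_mul_of_nonneg_left (by linarith) hα0
  nlinarith [sq_nonneg ‖p‖, sq_nonneg α, mul_nonneg (mul_nonneg hL.le (sq_nonneg α)) (sq_nonneg ‖p‖)]
end

section
/- Let g_1, …, g_m : ℝⁿ → ℝ be differentiable, G(θ) = max_{1≤i≤m} g_i(θ), and let p ∈ ℝⁿ, p ≠ 0, β ∈ ℝ, ε ∈ (0, 1/2), δ > 0, L > 0, K ≥ 0. Assume: (i) for every i ∈ J_δ(θ) = {i : g_i(θ) ≥ G(θ) − δ}, ⟨∇g_i(θ), p⟩ + g_i(θ) − β ≤ 0 and ∇g_i is L-Lipschitz on the segment from θ to θ + p; (ii) β ≤ G(θ) − (1/2)‖p‖²; (iii) for every i ∉ J_δ(θ), ‖∇g_i(ξ)‖ ≤ K for ξ on the segment from θ to θ + p. Then for every α with 0 ≤ α ≤ min{1, δ/(‖p‖(K + ‖p‖/2)), (1/2 − ε)/L}, one has G(θ + α p) ≤ G(θ) − α ε ‖p‖². -/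
open RealInnerProductSpace

/-- `G(θ) = max_{1 ≤ i ≤ m} g_i(θ)`, the pointwise maximum of finitely many functions. -/
noncomputable def maxFun {n m : ℕ} (g : Fin (m+1) → EuclideanSpace ℝ (Fin n) → ℝ)
    (θ : EuclideanSpace ℝ (Fin n)) : ℝ :=
  Finset.univ.sup' Finset.univ_nonempty (fun i => g i θ)

/-- Sufficient-decrease estimate: under the feasibility conditions of the subsidiary
problem for δ-active indices, the Lipschitz condition on their gradients, the bound
`β ≤ G(θ) - (1/2)‖p‖²`, and the gradient bound `K` for inactive indices, for every
`0 ≤ α ≤ min{1, δ/(‖p‖(K + ‖p‖/2)), (1/2 - ε)/L}` one has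
`G(θ + α p) ≤ G(θ) - α ε ‖p‖²`. -/
theorem sufficient_decrease
    {n m : ℕ} (g : Fin (m+1) → EuclideanSpace ℝ (Fin n) → ℝ)
    (g' : Fin (m+1) → EuclideanSpace ℝ (Fin n) → EuclideanSpace ℝ (Fin n))
    (hg : ∀ i x, HasGradientAt (g i) (g' i x) x)
    (θ p : EuclideanSpace ℝ (Fin n)) (hp : p ≠ 0)
    (β ε δ L K : ℝ)
    (hε : ε ∈ Set.Ioo (0:ℝ) (1/2)) (hδ : 0 < δ) (hL : 0 < L) (hK : 0 ≤ K)
    (hactive : ∀ i, maxFun g θ - δ ≤ g i θ →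
      (⟪g' i θ, p⟫ + g i θ - β ≤ 0 ∧
        ∀ x ∈ segment ℝ θ (θ + p), ∀ y ∈ segment ℝ θ (θ + p),
          ‖g' i x - g' i y‖ ≤ L * ‖x - y‖))
    (hβ : β ≤ maxFun g θ - (1/2) * ‖p‖^2)
    (hinactive : ∀ i, ¬ (maxFun g θ - δ ≤ g i θ) →
      ∀ ξ ∈ segment ℝ θ (θ + p), ‖g' i ξ‖ ≤ K) :
    ∀ α : ℝ, 0 ≤ α →
      α ≤ min 1 (min (δ / (‖p‖ * (K + ‖p‖ / 2))) ((1/2 - ε) / L)) →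
      maxFun g (θ + α • p) ≤ maxFun g θ - α * ε * ‖p‖^2 := by
  intro α hα0 hα
  obtain ⟨hα1, hα2, hα3⟩ : α ≤ 1 ∧ α ≤ δ / (‖p‖ * (K + ‖p‖ / 2)) ∧ α ≤ (1/2 - ε) / L := by
    rw [le_min_iff, le_min_iff] at hα; exact ⟨hα.1, hα.2.1, hα.2.2⟩
  have hpnorm : (0:ℝ) < ‖p‖ := norm_pos_iff.mpr hp
  have hεpos := hε.1
  have hεlt := hε.2
  have hLα : L * α ≤ 1/2 - ε := by
    rw [mul_comm, ← le_div_iff₀ hL]; exact hα3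
  -- the small segment is inside the big one
  have hmem : θ + α • p ∈ segment ℝ θ (θ + p) := by
    refine ⟨1 - α, α, by linarith, hα0, by ring, ?_⟩
    module
  have hsub : segment ℝ θ (θ + α • p) ⊆ segment ℝ θ (θ + p) :=
    (convex_segment θ (θ + p)).segment_subset (left_mem_segment ℝ θ (θ + p)) hmem
  -- norm bound on points of the small segment
  have hdist : ∀ z ∈ segment ℝ θ (θ + α • p), ‖z - θ‖ ≤ α * ‖p‖ := by
    intro z hz
    rw [segment_eq_image'] at hz
    obtain ⟨t, ht, rfl⟩ := hz
    simp only [add_sub_cancel_left]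
    rw [norm_smul, norm_smul, Real.norm_eq_abs, Real.norm_eq_abs,
      abs_of_nonneg ht.1, abs_of_nonneg hα0]
    have : t * (α * ‖p‖) ≤ 1 * (α * ‖p‖) :=
      mul_le_mul_of_nonneg_right ht.2 (by positivity)
    nlinarith
  have hnormαp : ‖α • p‖ = α * ‖p‖ := by
    rw [norm_smul, Real.norm_eq_abs, abs_of_nonneg hα0]
  have hθmem := left_mem_segment ℝ θ (θ + α • p)
  have hθpmem := right_mem_segment ℝ θ (θ + α • p)
  have hconv : Convex ℝ (segment ℝ θ (θ + α • p)) := convex_segment θ (θ + α • p)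
  have hG : maxFun g θ - α * ε * ‖p‖^2 = maxFun g θ - α * ε * ‖p‖^2 := rfl
  rw [maxFun]
  apply Finset.sup'_le
  intro i _
  have hgiθ : g i θ ≤ maxFun g θ :=
    Finset.le_sup' (fun j => g j θ) (Finset.mem_univ i)
  by_cases hact : maxFun g θ - δ ≤ g i θ
  · -- active case
    obtain ⟨hfeas, hlip⟩ := hactive i hact
    have key : ‖g i (θ + α • p) - g i θ -
        (InnerProductSpace.toDual ℝ (EuclideanSpace ℝ (Fin n)) (g' i θ)) ((θ + α • p) - θ)‖ ≤
        (L * (α * ‖p‖)) * ‖(θ + α • p) - θ‖ := by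
      apply Convex.norm_image_sub_le_of_norm_hasFDerivWithin_le' (𝕜 := ℝ)
        (f' := fun z => InnerProductSpace.toDual ℝ (EuclideanSpace ℝ (Fin n)) (g' i z))
        (fun z hz => ((hg i z).hasFDerivAt).hasFDerivWithinAt) ?_ hconv hθmem hθpmem
      intro z hz
      rw [← map_sub, (InnerProductSpace.toDual ℝ (EuclideanSpace ℝ (Fin n))).norm_map]
      calc ‖g' i z - g' i θ‖ ≤ L * ‖z - θ‖ :=
            hlip z (hsub hz) θ (left_mem_segment ℝ θ (θ + p))
        _ ≤ L * (α * ‖p‖) := by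
            exact mul_le_mul_of_nonneg_left (hdist z hz) hL.le
    rw [add_sub_cancel_left, InnerProductSpace.toDual_apply_apply, real_inner_smul_right,
      hnormαp] at key
    have key2 : g i (θ + α • p) - g i θ - α * ⟪g' i θ, p⟫ ≤ L * (α * ‖p‖) * (α * ‖p‖) :=
      (abs_le.mp (by rwa [← Real.norm_eq_abs])).2
    have hinner : ⟪g' i θ, p⟫ ≤ β - g i θ := by linarith
    have hsq : ‖p‖^2 = ‖p‖ * ‖p‖ := sq ‖p‖
    nlinarith [mul_le_mul_of_nonneg_left hinner hα0, mul_nonneg hα0 (sq_nonneg ‖p‖),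
      mul_le_mul_of_nonneg_right hLα (mul_nonneg hα0 (mul_nonneg hpnorm.le hpnorm.le)),
      mul_le_mul_of_nonneg_right hα1 (sub_nonneg.mpr hgiθ)]
  · -- inactive case
    have hKbound : ∀ z ∈ segment ℝ θ (θ + α • p),
        ‖(InnerProductSpace.toDual ℝ (EuclideanSpace ℝ (Fin n))) (g' i z)‖ ≤ K := by
      intro z hz
      rw [(InnerProductSpace.toDual ℝ (EuclideanSpace ℝ (Fin n))).norm_map]
      exact hinactive i hact z (hsub hz)
    have key : ‖g i (θ + α • p) - g i θ‖ ≤ K * ‖(θ + α • p) - θ‖ :=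
      Convex.norm_image_sub_le_of_norm_hasFDerivWithin_le (𝕜 := ℝ)
        (f' := fun z => InnerProductSpace.toDual ℝ (EuclideanSpace ℝ (Fin n)) (g' i z))
        (fun z hz => ((hg i z).hasFDerivAt).hasFDerivWithinAt) hKbound hconv hθmem hθpmem
    rw [add_sub_cancel_left, hnormαp] at key
    have key2 : g i (θ + α • p) - g i θ ≤ K * (α * ‖p‖) :=
      (abs_le.mp (by rwa [← Real.norm_eq_abs])).2
    have hgi_lt : g i θ < maxFun g θ - δ := lt_of_not_ge hact
    have hden : 0 < ‖p‖ * (K + ‖p‖ / 2) := by positivity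
    have hαδ : α * (‖p‖ * (K + ‖p‖ / 2)) ≤ δ := by
      rw [← le_div_iff₀ hden]; exact hα2
    have hsq : ‖p‖^2 = ‖p‖ * ‖p‖ := sq ‖p‖
    nlinarith [mul_le_mul_of_nonneg_left hεlt.le (mul_nonneg hα0 (mul_nonneg hpnorm.le hpnorm.le))]
end

section
/- Let σ ∈ (0, 1), α_0 > 0, let η_k ≥ 0 with Σ_{k=0}^∞ η_k < ∞, and let b : ℕ → {0, 1}. Define α_{k+1} = α_k + η_k σ^{s_k} if b_k = 0 and α_{k+1} = σ α_k if b_k = 1, where s_k = #{j < k : b_j = 1}. If b_k = 1 for infinitely many k, then α_k → 0 as k → ∞. -/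
open Filter

/-- `sCount b k` is the number of indices `j < k` with `b j = true`
(the number of unsuccessful iterations before `k`). -/
def sCount (b : ℕ → Bool) (k : ℕ) : ℕ :=
  ((Finset.range k).filter (fun j => b j = true)).card

lemma sCount_mono (b : ℕ → Bool) : Monotone (sCount b) := by
  intro m n hmn
  exact Finset.card_le_card (Finset.filter_subset_filter _ (Finset.range_subset_range.2 hmn))

lemma sCount_succ (b : ℕ → Bool) (k : ℕ) :
    sCount b (k+1) = if b k then sCount b k + 1 else sCount b k := by
  unfold sCount
  rw [Finset.range_add_one, Finset.filter_insert]
  split <;> rename_i h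
  · simp [h, Finset.card_insert_of_notMem]
  · simp [h]

/-- Contradiction step of Lemma 3.2: if there are infinitely many unsuccessful
iterations (`b k = 1`), then the step sizes tend to 0. -/
theorem stepsize_tendsto_zero_of_infinitely_many_failures
    (σ α0 : ℝ) (hσ : σ ∈ Set.Ioo (0:ℝ) 1) (hα0 : 0 < α0)
    (η : ℕ → ℝ) (hη : ∀ k, 0 ≤ η k) (hηsum : Summable η)
    (b : ℕ → Bool) (α : ℕ → ℝ)
    (h0 : α 0 = α0)
    (hrec : ∀ k, α (k+1) = if b k then σ * α k else α k + η k * σ ^ (sCount b k))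
    (hinf : ∀ N : ℕ, ∃ k, N ≤ k ∧ b k = true) :
    Tendsto α atTop (nhds 0) := by
  obtain ⟨hσ0, hσ1⟩ := hσ
  -- nonnegativity
  have hαnn : ∀ k, 0 ≤ α k := by
    intro k
    induction k with
    | zero => rw [h0]; exact hα0.le
    | succ k ih =>
      rw [hrec k]
      split
      · exact mul_nonneg hσ0.le ih
      · exact add_nonneg ih (mul_nonneg (hη k) (pow_nonneg hσ0.le _))
  -- key bound
  have hbound : ∀ k, α k ≤ σ ^ (sCount b k) * (α0 + ∑ i ∈ Finset.range k, η i) := by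
    intro k
    induction k with
    | zero => simp [h0, sCount]
    | succ k ih =>
      rw [hrec k, sCount_succ]
      by_cases hb : b k
      · simp only [hb, if_true]
        calc σ * α k ≤ σ * (σ ^ (sCount b k) * (α0 + ∑ i ∈ Finset.range k, η i)) :=
              mul_le_mul_of_nonneg_left ih hσ0.le
          _ = σ ^ (sCount b k + 1) * (α0 + ∑ i ∈ Finset.range k, η i) := by ring
          _ ≤ σ ^ (sCount b k + 1) * (α0 + ∑ i ∈ Finset.range (k+1), η i) := by
              apply mul_le_mul_of_nonneg_left _ (pow_nonneg hσ0.le _)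
              rw [Finset.sum_range_succ]
              linarith [hη k]
      · simp only [hb, if_false]
        rw [Finset.sum_range_succ]
        calc α k + η k * σ ^ (sCount b k)
            ≤ σ ^ (sCount b k) * (α0 + ∑ i ∈ Finset.range k, η i) + η k * σ ^ (sCount b k) := by
              linarith
          _ = σ ^ (sCount b k) * (α0 + (∑ i ∈ Finset.range k, η i + η k)) := by ring
  -- uniform bound on sums
  set C : ℝ := α0 + ∑' i, η i with hC
  have hsumle : ∀ k, ∑ i ∈ Finset.range k, η i ≤ ∑' i, η i := fun k =>
    Summable.sum_le_tsum _ (fun i _ => hη i) hηsum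
  have hCnn : 0 ≤ C := add_nonneg hα0.le (tsum_nonneg hη)
  have hbound' : ∀ k, α k ≤ σ ^ (sCount b k) * C := by
    intro k
    refine (hbound k).trans ?_
    apply mul_le_mul_of_nonneg_left _ (pow_nonneg hσ0.le _)
    exact add_le_add_right (hsumle k) _
  -- sCount tends to atTop
  have hsc : Tendsto (sCount b) atTop atTop := by
    apply tendsto_atTop_atTop.2
    intro N
    have : ∀ n : ℕ, ∃ k, n ≤ sCount b k := by
      intro n
      induction n with
      | zero => exact ⟨0, Nat.zero_le _⟩
      | succ n ih =>
        obtain ⟨k, hk⟩ := ih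
        obtain ⟨j, hjk, hbj⟩ := hinf k
        refine ⟨j + 1, ?_⟩
        rw [sCount_succ, if_pos hbj]
        exact Nat.succ_le_succ (hk.trans (sCount_mono b hjk))
    obtain ⟨k, hk⟩ := this N
    exact ⟨k, fun m hm => hk.trans (sCount_mono b hm)⟩
  have hpow : Tendsto (fun k => σ ^ (sCount b k) * C) atTop (nhds 0) := by
    have h1 : Tendsto (fun k => σ ^ (sCount b k)) atTop (nhds 0) :=
      (tendsto_pow_atTop_nhds_zero_of_lt_one hσ0.le hσ1).comp hsc
    simpa using h1.mul_const C
  exact tendsto_of_tendsto_of_tendsto_of_le_of_le tendsto_const_nhds hpow hαnn hbound'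
end

section
/- Let g_1, …, g_m : ℝⁿ → ℝ be continuously differentiable and G(θ) = max_{1≤i≤m} g_i(θ). Suppose θ^k → θ* in ℝⁿ, p_k → 0 in ℝⁿ, β_k → G(θ*) in ℝ, and for each k there are weights u_k ∈ ℝᵐ with u_k^i ≥ 0, Σ_i u_k^i = 1, p_k + Σ_i u_k^i ∇g_i(θ^k) = 0, and u_k^i (⟨∇g_i(θ^k), p_k⟩ + g_i(θ^k) − β_k) = 0 for all i. Then there exists ū ∈ ℝᵐ with ū^i ≥ 0, Σ_i ū^i = 1, Σ_i ū^i ∇g_i(θ*) = 0, and ū^i (g_i(θ*) − G(θ*)) = 0 for all i. -/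
open RealInnerProductSpace Filter

/-- Lemma 3.3: passing the KKT conditions of the subsidiary problem to the limit, any
limit point `θ*` of the iterates satisfies the stationarity conditions for `min G`. -/
theorem limit_point_satisfies_stationarity
    {n m : ℕ} (g : Fin (m+1) → EuclideanSpace ℝ (Fin n) → ℝ)
    (g' : Fin (m+1) → EuclideanSpace ℝ (Fin n) → EuclideanSpace ℝ (Fin n))
    (hg : ∀ i x, HasGradientAt (g i) (g' i x) x)
    (hg' : ∀ i, Continuous (g' i))
    (θseq pseq : ℕ → EuclideanSpace ℝ (Fin n)) (βseq : ℕ → ℝ)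
    (u : ℕ → Fin (m+1) → ℝ)
    (θstar : EuclideanSpace ℝ (Fin n))
    (hθ : Tendsto θseq atTop (nhds θstar))
    (hp : Tendsto pseq atTop (nhds 0))
    (hβ : Tendsto βseq atTop (nhds (maxFun g θstar)))
    (hu_nonneg : ∀ k i, 0 ≤ u k i)
    (hu_sum : ∀ k, ∑ i, u k i = 1)
    (hu_grad : ∀ k, pseq k + ∑ i, u k i • g' i (θseq k) = 0)
    (hu_comp : ∀ k i, u k i * (⟪g' i (θseq k), pseq k⟫ + g i (θseq k) - βseq k) = 0) :
    ∃ ubar : Fin (m+1) → ℝ, (∀ i, 0 ≤ ubar i) ∧ (∑ i, ubar i = 1) ∧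
      (∑ i, ubar i • g' i θstar = 0) ∧
      (∀ i, ubar i * (g i θstar - maxFun g θstar) = 0) := by

  -- continuity of each g i
  have hgc : ∀ i, Continuous (g i) := fun i =>
    continuous_iff_continuousAt.2 fun x => ((hg i x).hasFDerivAt).continuousAt
  -- u k lies in the compact cube [0,1]^{m+1}
  have hmem : ∀ k, u k ∈ Set.Icc (0 : Fin (m+1) → ℝ) 1 := by
    intro k
    constructor
    · intro i; exact hu_nonneg k i
    · intro i
      calc u k i ≤ ∑ j, u k j :=
            Finset.single_le_sum (fun j _ => hu_nonneg k j) (Finset.mem_univ i)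
        _ = 1 := hu_sum k
  obtain ⟨ubar, hubar_mem, φ, hφ, hconv⟩ :=
    (isCompact_Icc (a := (0 : Fin (m+1) → ℝ)) (b := 1)).tendsto_subseq hmem
  have hθ' : Tendsto (θseq ∘ φ) atTop (nhds θstar) := hθ.comp hφ.tendsto_atTop
  have hp' : Tendsto (pseq ∘ φ) atTop (nhds 0) := hp.comp hφ.tendsto_atTop
  have hβ' : Tendsto (βseq ∘ φ) atTop (nhds (maxFun g θstar)) := hβ.comp hφ.tendsto_atTop
  have hui : ∀ i, Tendsto (fun k => u (φ k) i) atTop (nhds (ubar i)) := fun i =>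
    tendsto_pi_nhds.1 hconv i
  refine ⟨ubar, fun i => hubar_mem.1 i, ?_, ?_, ?_⟩
  · -- sum = 1
    have h1 : Tendsto (fun k => ∑ i, u (φ k) i) atTop (nhds (∑ i, ubar i)) :=
      tendsto_finset_sum _ fun i _ => hui i
    have h2 : Tendsto (fun k => ∑ i, u (φ k) i) atTop (nhds 1) := by
      simp only [hu_sum]; exact tendsto_const_nhds
    exact tendsto_nhds_unique h1 h2
  · -- gradient condition
    have h1 : Tendsto (fun k => pseq (φ k) + ∑ i, u (φ k) i • g' i (θseq (φ k))) atTop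
        (nhds (0 + ∑ i, ubar i • g' i θstar)) := by
      refine Tendsto.add hp' (tendsto_finset_sum _ fun i _ => ?_)
      exact (hui i).smul (((hg' i).tendsto θstar).comp hθ')
    have h2 : Tendsto (fun k => pseq (φ k) + ∑ i, u (φ k) i • g' i (θseq (φ k))) atTop
        (nhds 0) := by
      simp only [hu_grad]; exact tendsto_const_nhds
    have := tendsto_nhds_unique h1 h2
    rwa [zero_add] at this
  · -- complementarity
    intro i
    have h1 : Tendsto
        (fun k => u (φ k) i * (⟪g' i (θseq (φ k)), pseq (φ k)⟫ + g i (θseq (φ k)) - βseq (φ k)))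
        atTop (nhds (ubar i * (⟪g' i θstar, (0 : EuclideanSpace ℝ (Fin n))⟫ + g i θstar
          - maxFun g θstar))) := by
      refine (hui i).mul (Tendsto.sub (Tendsto.add ?_ (((hgc i).tendsto θstar).comp hθ')) hβ')
      exact Tendsto.inner (((hg' i).tendsto θstar).comp hθ') hp'
    have h2 : Tendsto
        (fun k => u (φ k) i * (⟪g' i (θseq (φ k)), pseq (φ k)⟫ + g i (θseq (φ k)) - βseq (φ k)))
        atTop (nhds 0) := by
      simp only [hu_comp]; exact tendsto_const_nhds
    have := tendsto_nhds_unique h1 h2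
    rwa [inner_zero_right, zero_add] at this
end

section
/- Let g_1, …, g_m : ℝⁿ → ℝ be differentiable and pseudoconvex, G(θ) = max_{1≤i≤m} g_i(θ), and θ* ∈ ℝⁿ. Suppose there exist ū^i ≥ 0 with Σ_{i=1}^m ū^i = 1, Σ_{i=1}^m ū^i ∇g_i(θ*) = 0, and ū^i (g_i(θ*) − G(θ*)) = 0 for all i. Then G(θ*) ≤ G(θ) for all θ ∈ ℝⁿ, i.e., θ* is a global minimum of G. -/
open RealInnerProductSpace

/-- Optimality content of Theorem 3.3: if the `g_i` are differentiable and pseudoconvex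
and `θ*` satisfies the KKT stationarity conditions for `min G`, then `θ*` is a global
minimum of `G`. -/
theorem kkt_pseudoconvex_global_min
    {n m : ℕ} (g : Fin (m+1) → EuclideanSpace ℝ (Fin n) → ℝ)
    (g' : Fin (m+1) → EuclideanSpace ℝ (Fin n) → EuclideanSpace ℝ (Fin n))
    (hg : ∀ i x, HasGradientAt (g i) (g' i x) x)
    (hpc : ∀ i, ∀ x y : EuclideanSpace ℝ (Fin n), g i y < g i x → ⟪g' i x, y - x⟫ < 0)
    (θstar : EuclideanSpace ℝ (Fin n)) (ubar : Fin (m+1) → ℝ)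
    (hu_nonneg : ∀ i, 0 ≤ ubar i)
    (hu_sum : ∑ i, ubar i = 1)
    (hu_grad : ∑ i, ubar i • g' i θstar = 0)
    (hu_comp : ∀ i, ubar i * (g i θstar - maxFun g θstar) = 0) :
    ∀ θ : EuclideanSpace ℝ (Fin n), maxFun g θstar ≤ maxFun g θ := by
  intro θ
  by_contra h
  push_neg at h
  -- some index has positive multiplier
  obtain ⟨j, hj⟩ : ∃ j, 0 < ubar j := by
    by_contra hall
    push_neg at hall
    have : ∀ i ∈ Finset.univ, ubar i = 0 := fun i _ =>
      le_antisymm (hall i) (hu_nonneg i)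
    rw [Finset.sum_eq_zero this] at hu_sum
    norm_num at hu_sum
  -- each term ubar i * ⟪g' i θ*, θ - θ*⟫ ≤ 0, with strict at j
  have hterm : ∀ i, 0 < ubar i → ⟪g' i θstar, θ - θstar⟫ < 0 := by
    intro i hi
    apply hpc
    have hact : g i θstar = maxFun g θstar := by
      have := hu_comp i
      have := mul_eq_zero.mp this
      rcases this with h1 | h2
      · exact absurd h1 (ne_of_gt hi)
      · linarith [sub_eq_zero.mp h2]
    have hle : g i θ ≤ maxFun g θ :=
      Finset.le_sup' (fun k => g k θ) (Finset.mem_univ i)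
    linarith
  have hinner : ⟪∑ i, ubar i • g' i θstar, θ - θstar⟫ = 0 := by
    rw [hu_grad, inner_zero_left]
  rw [sum_inner] at hinner
  simp only [real_inner_smul_left] at hinner
  have hlt : (∑ i, ubar i * ⟪g' i θstar, θ - θstar⟫) < 0 := by
    have : (∑ i : Fin (m+1), ubar i * ⟪g' i θstar, θ - θstar⟫) <
        ∑ i : Fin (m+1), (0 : ℝ) := by
      apply Finset.sum_lt_sum
      · intro i _
        rcases eq_or_lt_of_le (hu_nonneg i) with h0 | h0
        · simp [← h0]
        · exact le_of_lt (mul_neg_of_pos_of_neg h0 (hterm i h0))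
      · exact ⟨j, Finset.mem_univ j, mul_neg_of_pos_of_neg hj (hterm j hj)⟩
    simpa using this
  linarith
end

section
/- Let g_1, …, g_m : ℝⁿ → ℝ be differentiable and pseudoconvex, G(θ) = max_{1≤i≤m} g_i(θ), and θ* ∈ ℝⁿ. Suppose there exist ū^i ≥ 0 with Σ_{i=1}^m ū^i = 1, Σ_{i=1}^m ū^i ∇g_i(θ*) = 0, and ū^i (g_i(θ*) − G(θ*)) = 0 for all i. Then θ* is a weakly efficient point of the multiobjective problem min_{θ ∈ ℝⁿ} (g_1(θ), …, g_m(θ)): there is no θ ∈ ℝⁿ with g_i(θ) < g_i(θ*) for all i = 1, …, m. -/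
open RealInnerProductSpace

/-- Part (3) of Theorem 4.1: if the `g_i` are differentiable and pseudoconvex and `θ*`
satisfies the KKT stationarity conditions for `min max_i g_i`, then `θ*` is a weakly
efficient point of the multiobjective problem. -/
theorem kkt_pseudoconvex_weakly_efficient
    {n m : ℕ} (g : Fin (m+1) → EuclideanSpace ℝ (Fin n) → ℝ)
    (g' : Fin (m+1) → EuclideanSpace ℝ (Fin n) → EuclideanSpace ℝ (Fin n))
    (hg : ∀ i x, HasGradientAt (g i) (g' i x) x)
    (hpc : ∀ i, ∀ x y : EuclideanSpace ℝ (Fin n), g i y < g i x → ⟪g' i x, y - x⟫ < 0)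
    (θstar : EuclideanSpace ℝ (Fin n)) (ubar : Fin (m+1) → ℝ)
    (hu_nonneg : ∀ i, 0 ≤ ubar i)
    (hu_sum : ∑ i, ubar i = 1)
    (hu_grad : ∑ i, ubar i • g' i θstar = 0)
    (hu_comp : ∀ i, ubar i * (g i θstar - maxFun g θstar) = 0) :
    ¬ ∃ θ : EuclideanSpace ℝ (Fin n), ∀ i, g i θ < g i θstar := by
  rintro ⟨θ, hθ⟩
  have hneg : ∀ i, ⟪g' i θstar, θ - θstar⟫ < 0 := fun i => hpc i θstar θ (hθ i)
  have hzero : (∑ i, ubar i * ⟪g' i θstar, θ - θstar⟫) = 0 := by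
    have h0 : ⟪(∑ i, ubar i • g' i θstar : EuclideanSpace ℝ (Fin n)), θ - θstar⟫ = 0 := by
      rw [hu_grad]; exact inner_zero_left _
    rw [sum_inner] at h0
    simp only [real_inner_smul_left] at h0
    exact h0
  -- some i has ubar i > 0
  obtain ⟨j, hj⟩ : ∃ j, 0 < ubar j := by
    by_contra h
    push_neg at h
    have : ∀ i, ubar i = 0 := fun i => le_antisymm (h i) (hu_nonneg i)
    simp [this] at hu_sum
  have hlt : (∑ i, ubar i * ⟪g' i θstar, θ - θstar⟫) < 0 := by
    have hle : ∀ i ∈ Finset.univ, ubar i * ⟪g' i θstar, θ - θstar⟫ ≤ 0 :=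
      fun i _ => mul_nonpos_of_nonneg_of_nonpos (hu_nonneg i) (hneg i).le
    exact Finset.sum_neg' hle ⟨j, Finset.mem_univ j,
      mul_neg_of_pos_of_neg hj (hneg j)⟩
  exact absurd hzero hlt.ne
end
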